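/- Let M̂ be the (q+1)×(q+1) lower triangular matrix with diagonal entries 1/2 and strictly-lower entries 1. Then the symmetric matrix M̂ᵀM̂ is positive semidefinite, and consequently all eigenvalues of the matrix A = −μβ² M̂ᵀM̂ − uβ M̂ (with μ, u, β > 0) have nonpositive real part. -/

import Mathlib

open scoped ComplexOrder


open Matrix

private lemma exists_eigvec {n : Type*} [Fintype n] [DecidableEq n] [Nonempty n]
    (M : Matrix n n ℂ) (lam : ℂ) (h : M.charpoly.IsRoot lam) :
    ∃ v : n → ℂ, v ≠ 0 ∧ M *ᵥ v = lam • v := by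
  have h0 : ((lam • (1 : Matrix n n ℂ)) - M).det = 0 := by
    have he : Polynomial.eval lam M.charpoly = 0 := h
    rw [Matrix.charpoly, eval_det, matPolyEquiv_charmatrix] at he
    rw [Polynomial.eval_sub, Polynomial.eval_X, Polynomial.eval_C] at he
    convert he using 2
    simp [Matrix.scalar_apply, Matrix.smul_eq_diagonal_mul]
  obtain ⟨v, hv, hveq⟩ := Matrix.exists_mulVec_eq_zero_iff.2 h0
  refine ⟨v, hv, ?_⟩
  rw [Matrix.sub_mulVec, Matrix.smul_mulVec, Matrix.one_mulVec, sub_eq_zero] at hveq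
  exact hveq.symm

/-- `M̂ᵀM̂` is positive semidefinite, hence every (complex) eigenvalue of
`A = -μβ² M̂ᵀM̂ - uβ M̂` (with `μ, u, β > 0`) has nonpositive real part. -/
theorem modal_laguerre_matrix_stable (q : ℕ) (μ u β : ℝ)
    (hμ : 0 < μ) (hu : 0 < u) (hβ : 0 < β)
    (Mhat : Matrix (Fin (q + 1)) (Fin (q + 1)) ℝ)
    (hM : Mhat = Matrix.of fun (i j : Fin (q + 1)) =>
      if i = j then (1 : ℝ) / 2 else if (j : ℕ) < (i : ℕ) then 1 else 0)
    (A : Matrix (Fin (q + 1)) (Fin (q + 1)) ℝ)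
    (hA : A = -(μ * β ^ 2) • (Mhatᵀ * Mhat) - (u * β) • Mhat) :
    (Mhatᵀ * Mhat).PosSemidef ∧
    ∀ lam : ℂ, (A.map (Complex.ofReal ·)).charpoly.IsRoot lam → lam.re ≤ 0 := by
  constructor
  · have := Matrix.posSemidef_conjTranspose_mul_self Mhat
    rwa [Matrix.conjTranspose_eq_transpose_of_trivial] at this
  intro lam hroot
  set c : ℝ := μ * β ^ 2 with hc
  set d : ℝ := u * β with hd
  have hcpos : 0 < c := by positivity
  have hdpos : 0 < d := by positivity
  set N : Matrix (Fin (q + 1)) (Fin (q + 1)) ℂ := Mhat.map (Complex.ofReal ·) with hN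
  -- N has real entries
  have hNH : Nᴴ = Nᵀ := by
    ext i j
    simp [hN, Matrix.conjTranspose_apply, Matrix.map_apply, Complex.conj_ofReal]
  have hmap : A.map (Complex.ofReal ·) = -((c : ℂ)) • (Nᵀ * N) - ((d : ℂ)) • N := by
    subst hA
    ext i j
    simp only [Matrix.map_apply, Matrix.sub_apply, Matrix.smul_apply, Matrix.neg_apply,
      Matrix.mul_apply, Matrix.transpose_apply, hN, smul_eq_mul]
    push_cast
    ring
  obtain ⟨v, hv, hveq⟩ := exists_eigvec _ lam hroot
  -- the Rayleigh quotient
  set S : ℂ := star v ⬝ᵥ ((A.map (Complex.ofReal ·)) *ᵥ v) with hS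
  have hn2 : star v ⬝ᵥ v = ((∑ i, Complex.normSq (v i) : ℝ) : ℂ) := by
    simp [dotProduct, Pi.star_apply, Complex.star_def, Complex.normSq_eq_conj_mul_self]
  have hn2pos : 0 < ∑ i, Complex.normSq (v i) := by
    obtain ⟨i, hi⟩ := Function.ne_iff.1 hv
    exact Finset.sum_pos' (fun j _ => Complex.normSq_nonneg _)
      ⟨i, Finset.mem_univ i, by simpa [Complex.normSq_pos] using hi⟩
  have hSeq : S = lam * ((∑ i, Complex.normSq (v i) : ℝ) : ℂ) := by
    rw [hS, hveq, dotProduct_smul, smul_eq_mul, hn2]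
  -- split S
  set T1 : ℂ := star v ⬝ᵥ ((Nᵀ * N) *ᵥ v) with hT1
  set T2 : ℂ := star v ⬝ᵥ (N *ᵥ v) with hT2
  have hSsplit : S = -(c : ℂ) * T1 - (d : ℂ) * T2 := by
    rw [hS, hmap]
    simp only [Matrix.sub_mulVec, dotProduct_sub, Matrix.smul_mulVec,
      dotProduct_smul, smul_eq_mul]
    rfl
  -- T1 has nonnegative real part
  have hT1nonneg : 0 ≤ T1.re := by
    have hps := Matrix.posSemidef_conjTranspose_mul_self N
    have := hps.dotProduct_mulVec_nonneg v
    rw [hNH] at this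
    exact (Complex.le_def.1 this).1
  -- T2 has nonnegative real part
  have hre : ∀ i j : Fin (q + 1), ((starRingEnd ℂ) (v i) * v j).re
      = ((starRingEnd ℂ) (v j) * v i).re := by
    intro i j
    simp only [Complex.mul_re, Complex.conj_re, Complex.conj_im]
    ring
  have hT2re : T2.re = ∑ i, ∑ j, Mhat i j * ((starRingEnd ℂ) (v i) * v j).re := by
    rw [hT2]
    simp only [dotProduct, Matrix.mulVec, dotProduct, Pi.star_apply, Complex.star_def,
      Finset.mul_sum, hN, Matrix.map_apply]
    rw [Complex.re_sum]
    refine Finset.sum_congr rfl fun i _ => ?_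
    rw [Complex.re_sum]
    refine Finset.sum_congr rfl fun j _ => ?_
    rw [show (starRingEnd ℂ) (v i) * ((Mhat i j : ℂ) * v j)
        = (Mhat i j : ℂ) * ((starRingEnd ℂ) (v i) * v j) by ring, Complex.re_ofReal_mul]
  have hMsum : ∀ i j : Fin (q + 1), Mhat i j + Mhat j i = 1 := by
    intro i j
    subst hM
    simp only [Matrix.of_apply]
    rcases lt_trichotomy (i : ℕ) (j : ℕ) with h | h | h
    · have hij : i ≠ j := fun he => by rw [he] at h; exact lt_irrefl _ h
      have hji : j ≠ i := fun he => hij he.symm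
      rw [if_neg hij, if_neg hji, if_neg (not_lt.2 h.le), if_pos h]
      norm_num
    · have hij : i = j := Fin.ext h
      rw [if_pos hij, if_pos hij.symm]
      norm_num
    · have hij : i ≠ j := fun he => by rw [he] at h; exact lt_irrefl _ h
      have hji : j ≠ i := fun he => hij he.symm
      rw [if_neg hij, if_neg hji, if_pos h, if_neg (not_lt.2 h.le)]
      norm_num
  have hT2nonneg : 0 ≤ T2.re := by
    have h2 : 2 * T2.re = ∑ i, ∑ j, ((starRingEnd ℂ) (v i) * v j).re := by
      have hswap : T2.re = ∑ i, ∑ j, Mhat j i * ((starRingEnd ℂ) (v i) * v j).re := by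
        rw [hT2re, Finset.sum_comm]
        exact Finset.sum_congr rfl fun i _ => Finset.sum_congr rfl fun j _ => by rw [hre]
      have hadd : T2.re + T2.re
          = ∑ i, ∑ j, (Mhat i j + Mhat j i) * ((starRingEnd ℂ) (v i) * v j).re := by
        simp only [add_mul, Finset.sum_add_distrib]
        rw [← hT2re, ← hswap]
      rw [two_mul, hadd]
      exact Finset.sum_congr rfl fun i _ => Finset.sum_congr rfl fun j _ => by
        rw [hMsum, one_mul]
    have hsq : ∑ i, ∑ j, ((starRingEnd ℂ) (v i) * v j).re
        = Complex.normSq (∑ i, v i) := by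
      have : ((starRingEnd ℂ) (∑ i, v i) * (∑ j, v j)).re
          = ∑ i, ∑ j, ((starRingEnd ℂ) (v i) * v j).re := by
        rw [map_sum, Finset.sum_mul, Complex.re_sum]
        refine Finset.sum_congr rfl fun i _ => ?_
        rw [Finset.mul_sum, Complex.re_sum]
      rw [← this, ← Complex.normSq_eq_conj_mul_self, Complex.ofReal_re]
    nlinarith [Complex.normSq_nonneg (∑ i, v i)]
  -- conclude
  have hSre : S.re = -c * T1.re - d * T2.re := by
    rw [hSsplit, neg_mul]
    simp only [Complex.sub_re, Complex.neg_re, Complex.re_ofReal_mul]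
    ring
  have hSre2 : S.re = lam.re * (∑ i, Complex.normSq (v i)) := by
    rw [hSeq]
    simp [Complex.mul_re]
  have hSle : S.re ≤ 0 := by
    rw [hSre]
    nlinarith
  nlinarith [hSre2, hSle, hn2pos]
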